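/- arXiv:1905.04937 — 2 statements merged into one kernel-verified Lean document; each statement's English description precedes it below -/
import Mathlib

section
/- Define F(Q)(x,u) = L(x,u) + γ · min_{v ∈ U}( E_p[Q(f(x,u,p),v)] + α · Var_p[Q(f(x,u,p),v)] ) on the set B of bounded functions Q : X × U → ℝ with B-bounded excursions, i.e. |Q(f(x,u,p),v) − E_p[Q(f(x,u,p),·),v)]| ≤ B for all (x,u,v,p). Then for Q₁, Q₂ ∈ B, ‖F(Q₁) − F(Q₂)‖_∞ ≤ γ(1 + 4αB)‖Q₁ − Q₂‖_∞. Consequently, if α < (1 − γ)/(4γB) and B is closed under F, the value iteration Q^{(i+1)} = F(Q^{(i)}) converges. -/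
open MeasureTheory Filter


/-- The stochastic Bellman operator with variance penalty `α`:
`F(Q)(x,u) = L(x,u) + γ min_v ( E_p[Q(f(x,u,p),v)] + α Var_p[Q(f(x,u,p),v)] )`. -/
noncomputable def bellmanVar {X U P : Type*} [Fintype U] [Nonempty U]
    [MeasurableSpace P] (μ : Measure P)
    (f : X → U → P → X) (L : X → U → ℝ) (γ α : ℝ) (Q : X → U → ℝ) : X → U → ℝ :=
  fun x u => L x u + γ * ⨅ v : U,
    ((∫ p, Q (f x u p) v ∂μ) +
      α * ∫ p, (Q (f x u p) v - ∫ q, Q (f x u q) v ∂μ) ^ 2 ∂μ)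

/-- Membership in the class `𝔅` of bounded `Q` functions that are integrable along the
dynamics and have `B`-bounded excursions. -/
def goodQ {X U P : Type*} [MeasurableSpace P] (μ : Measure P)
    (f : X → U → P → X) (B : ℝ) (Q : X → U → ℝ) : Prop :=
  (∃ C, ∀ x u, |Q x u| ≤ C) ∧
  (∀ x u v, Integrable (fun p => Q (f x u p) v) μ) ∧
  (∀ x u v p, |Q (f x u p) v - ∫ q, Q (f x u q) v ∂μ| ≤ B)

lemma key_bound {P : Type*} [MeasurableSpace P] (μ : Measure P) [IsProbabilityMeasure μ]
    (g₁ g₂ : P → ℝ) (h₁ : Integrable g₁ μ) (h₂ : Integrable g₂ μ)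
    (B M α : ℝ) (hα : 0 ≤ α) (hB : 0 ≤ B) (hM : 0 ≤ M)
    (hb₁ : ∀ p, |g₁ p - ∫ q, g₁ q ∂μ| ≤ B) (hb₂ : ∀ p, |g₂ p - ∫ q, g₂ q ∂μ| ≤ B)
    (hMp : ∀ p, |g₁ p - g₂ p| ≤ M) :
    |((∫ p, g₁ p ∂μ) + α * ∫ p, (g₁ p - ∫ q, g₁ q ∂μ) ^ 2 ∂μ) -
      ((∫ p, g₂ p ∂μ) + α * ∫ p, (g₂ p - ∫ q, g₂ q ∂μ) ^ 2 ∂μ)| ≤ (1 + 4 * α * B) * M := by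
  set m₁ := ∫ q, g₁ q ∂μ with hm₁
  set m₂ := ∫ q, g₂ q ∂μ with hm₂
  have hm : |m₁ - m₂| ≤ M := by
    have h : m₁ - m₂ = ∫ p, (g₁ p - g₂ p) ∂μ := (integral_sub h₁ h₂).symm
    rw [h]
    calc |∫ p, (g₁ p - g₂ p) ∂μ| = ‖∫ p, (g₁ p - g₂ p) ∂μ‖ := (Real.norm_eq_abs _).symm
      _ ≤ M * (μ Set.univ).toReal :=
        norm_integral_le_of_norm_le_const (Filter.Eventually.of_forall fun p => by
          simpa using hMp p)
      _ = M := by simp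
  have hsq : ∀ (g : P → ℝ) (m : ℝ), Integrable g μ → (∀ p, |g p - m| ≤ B) →
      Integrable (fun p => (g p - m) ^ 2) μ := by
    intro g m hg hb
    have h' : Integrable (fun p => g p - m) μ := hg.sub (integrable_const m)
    have := h'.bdd_mul (c := B) h'.aestronglyMeasurable (Filter.Eventually.of_forall fun p => by simpa using hb p)
    simpa [pow_two] using this
  have hs₁ := hsq g₁ m₁ h₁ hb₁
  have hs₂ := hsq g₂ m₂ h₂ hb₂
  have hpt : ∀ p, ‖(g₁ p - m₁) ^ 2 - (g₂ p - m₂) ^ 2‖ ≤ 4 * B * M := by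
    intro p
    have e1 := hb₁ p; have e2 := hb₂ p; have e3 := hMp p
    have e4 : |(g₁ p - m₁) - (g₂ p - m₂)| ≤ 2 * M := by
      have h : (g₁ p - m₁) - (g₂ p - m₂) = (g₁ p - g₂ p) - (m₁ - m₂) := by ring
      rw [h]
      calc |(g₁ p - g₂ p) - (m₁ - m₂)| ≤ |g₁ p - g₂ p| + |m₁ - m₂| := abs_sub _ _
        _ ≤ M + M := add_le_add e3 hm
        _ = 2 * M := by ring
    have e5 : |(g₁ p - m₁) + (g₂ p - m₂)| ≤ 2 * B := by
      calc |(g₁ p - m₁) + (g₂ p - m₂)| ≤ |g₁ p - m₁| + |g₂ p - m₂| := abs_add_le _ _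
        _ ≤ B + B := add_le_add e1 e2
        _ = 2 * B := by ring
    have h : (g₁ p - m₁) ^ 2 - (g₂ p - m₂) ^ 2 =
        ((g₁ p - m₁) + (g₂ p - m₂)) * ((g₁ p - m₁) - (g₂ p - m₂)) := by ring
    rw [Real.norm_eq_abs, h, abs_mul]
    calc |(g₁ p - m₁) + (g₂ p - m₂)| * |(g₁ p - m₁) - (g₂ p - m₂)|
        ≤ (2 * B) * (2 * M) := mul_le_mul e5 e4 (abs_nonneg _) (by linarith)
      _ = 4 * B * M := by ring
  have hV : |(∫ p, (g₁ p - m₁) ^ 2 ∂μ) - ∫ p, (g₂ p - m₂) ^ 2 ∂μ| ≤ 4 * B * M := by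
    rw [← integral_sub hs₁ hs₂]
    calc |∫ p, ((g₁ p - m₁) ^ 2 - (g₂ p - m₂) ^ 2) ∂μ|
        = ‖∫ p, ((g₁ p - m₁) ^ 2 - (g₂ p - m₂) ^ 2) ∂μ‖ := (Real.norm_eq_abs _).symm
      _ ≤ (4 * B * M) * (μ Set.univ).toReal :=
        norm_integral_le_of_norm_le_const (Filter.Eventually.of_forall hpt)
      _ = 4 * B * M := by simp
  have h : (m₁ + α * ∫ p, (g₁ p - m₁) ^ 2 ∂μ) - (m₂ + α * ∫ p, (g₂ p - m₂) ^ 2 ∂μ)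
      = (m₁ - m₂) + α * ((∫ p, (g₁ p - m₁) ^ 2 ∂μ) - ∫ p, (g₂ p - m₂) ^ 2 ∂μ) := by ring
  rw [h]
  calc |(m₁ - m₂) + α * ((∫ p, (g₁ p - m₁) ^ 2 ∂μ) - ∫ p, (g₂ p - m₂) ^ 2 ∂μ)|
      ≤ |m₁ - m₂| + |α * ((∫ p, (g₁ p - m₁) ^ 2 ∂μ) - ∫ p, (g₂ p - m₂) ^ 2 ∂μ)| := abs_add_le _ _
    _ = |m₁ - m₂| + α * |(∫ p, (g₁ p - m₁) ^ 2 ∂μ) - ∫ p, (g₂ p - m₂) ^ 2 ∂μ| := by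
        rw [abs_mul, abs_of_nonneg hα]
    _ ≤ M + α * (4 * B * M) := add_le_add hm (mul_le_mul_of_nonneg_left hV hα)
    _ = (1 + 4 * α * B) * M := by ring

lemma abs_ciInf_sub {U : Type*} [Fintype U] [Nonempty U] (A₁ A₂ : U → ℝ) (c : ℝ)
    (h : ∀ v, |A₁ v - A₂ v| ≤ c) : |(⨅ v, A₁ v) - ⨅ v, A₂ v| ≤ c := by
  have key : ∀ (F G : U → ℝ), (∀ v, F v ≤ G v + c) → (⨅ v, F v) - (⨅ v, G v) ≤ c := by
    intro F G hFG
    have h2 : (⨅ v, F v) - c ≤ ⨅ v, G v := le_ciInf fun v => by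
      have := ciInf_le (Finite.bddBelow_range F) v
      linarith [hFG v]
    linarith
  rw [abs_le]
  constructor
  · have := key A₂ A₁ fun v => by linarith [(abs_le.mp (h v)).1]
    linarith
  · exact key A₁ A₂ fun v => by linarith [(abs_le.mp (h v)).2]

/-- on the class of `B`-bounded-excursion functions the variance-penalized
Bellman operator is `γ(1+4αB)`-Lipschitz in the sup norm; consequently, if
`α < (1-γ)/(4γB)` and the class is closed under `F`, the value iteration converges. -/
theorem stmt_7 {X U P : Type*} [Fintype U] [Nonempty U] [Nonempty X]
    [MeasurableSpace P] (μ : Measure P) [IsProbabilityMeasure μ]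
    (f : X → U → P → X) (L : X → U → ℝ) (hL : ∃ C, ∀ x u, |L x u| ≤ C)
    (γ α B : ℝ) (hγ : γ ∈ Set.Ioo (0 : ℝ) 1) (hα : 0 ≤ α) (hB : 0 < B) :
    (∀ Q₁ Q₂ : X → U → ℝ, goodQ μ f B Q₁ → goodQ μ f B Q₂ →
      (⨆ z : X × U, |bellmanVar μ f L γ α Q₁ z.1 z.2 - bellmanVar μ f L γ α Q₂ z.1 z.2|)
        ≤ γ * (1 + 4 * α * B) * ⨆ z : X × U, |Q₁ z.1 z.2 - Q₂ z.1 z.2|) ∧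
    (α < (1 - γ) / (4 * γ * B) →
      ∀ Qseq : ℕ → X → U → ℝ,
        (∀ i, goodQ μ f B (Qseq i)) →
        (∀ i, Qseq (i + 1) = bellmanVar μ f L γ α (Qseq i)) →
        ∃ Qlim : X → U → ℝ,
          Tendsto (fun i => ⨆ z : X × U, |Qseq i z.1 z.2 - Qlim z.1 z.2|)
            atTop (nhds 0)) := by
  obtain ⟨hγ0, hγ1⟩ := hγ
  have main : ∀ Q₁ Q₂ : X → U → ℝ, goodQ μ f B Q₁ → goodQ μ f B Q₂ →
      (⨆ z : X × U, |bellmanVar μ f L γ α Q₁ z.1 z.2 - bellmanVar μ f L γ α Q₂ z.1 z.2|)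
        ≤ γ * (1 + 4 * α * B) * ⨆ z : X × U, |Q₁ z.1 z.2 - Q₂ z.1 z.2| := by
    intro Q₁ Q₂ hQ₁ hQ₂
    obtain ⟨⟨C₁, hC₁⟩, hI₁, hE₁⟩ := hQ₁
    obtain ⟨⟨C₂, hC₂⟩, hI₂, hE₂⟩ := hQ₂
    set M := ⨆ z : X × U, |Q₁ z.1 z.2 - Q₂ z.1 z.2| with hMdef
    have hBdd : BddAbove (Set.range fun z : X × U => |Q₁ z.1 z.2 - Q₂ z.1 z.2|) := by
      refine ⟨C₁ + C₂, ?_⟩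
      rintro _ ⟨z, rfl⟩
      calc |Q₁ z.1 z.2 - Q₂ z.1 z.2| ≤ |Q₁ z.1 z.2| + |Q₂ z.1 z.2| := abs_sub _ _
        _ ≤ C₁ + C₂ := add_le_add (hC₁ _ _) (hC₂ _ _)
    have hMpt : ∀ x u, |Q₁ x u - Q₂ x u| ≤ M := fun x u => le_ciSup hBdd (x, u)
    have hM0 : 0 ≤ M := Real.iSup_nonneg fun z => abs_nonneg _
    have hrhs : (0:ℝ) ≤ γ * (1 + 4 * α * B) * M := by positivity
    refine Real.iSup_le ?_ hrhs
    rintro ⟨x, u⟩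
    have hdiff : bellmanVar μ f L γ α Q₁ x u - bellmanVar μ f L γ α Q₂ x u
        = γ * ((⨅ v : U, ((∫ p, Q₁ (f x u p) v ∂μ) +
              α * ∫ p, (Q₁ (f x u p) v - ∫ q, Q₁ (f x u q) v ∂μ) ^ 2 ∂μ))
            - ⨅ v : U, ((∫ p, Q₂ (f x u p) v ∂μ) +
              α * ∫ p, (Q₂ (f x u p) v - ∫ q, Q₂ (f x u q) v ∂μ) ^ 2 ∂μ)) := by
      simp only [bellmanVar]; ring
    rw [hdiff, abs_mul, abs_of_pos hγ0, mul_assoc]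
    refine mul_le_mul_of_nonneg_left ?_ hγ0.le
    refine abs_ciInf_sub _ _ _ ?_
    intro v
    exact key_bound μ _ _ (hI₁ x u v) (hI₂ x u v) B M α hα hB.le hM0
      (hE₁ x u v) (hE₂ x u v) (fun p => hMpt _ _)
  refine ⟨main, ?_⟩
  intro hαlt Qseq hgood hrec
  set k := γ * (1 + 4 * α * B) with hkdef
  have hk0 : 0 < k := by positivity
  have hk1 : k < 1 := by
    have h4 : 0 < 4 * γ * B := by positivity
    have := (lt_div_iff₀ h4).mp hαlt
    nlinarith
  have hBddi : ∀ (F G : X → U → ℝ), goodQ μ f B F → goodQ μ f B G →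
      BddAbove (Set.range fun z : X × U => |F z.1 z.2 - G z.1 z.2|) := by
    intro F G hF hG
    obtain ⟨Ci, hCi⟩ := hF.1
    obtain ⟨Cj, hCj⟩ := hG.1
    refine ⟨Ci + Cj, ?_⟩
    rintro _ ⟨z, rfl⟩
    calc |F z.1 z.2 - G z.1 z.2| ≤ |F z.1 z.2| + |G z.1 z.2| := abs_sub _ _
      _ ≤ Ci + Cj := add_le_add (hCi _ _) (hCj _ _)
  set d : ℕ → ℝ := fun i => ⨆ z : X × U, |Qseq i z.1 z.2 - Qseq (i+1) z.1 z.2| with hddef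
  have hd : ∀ i, d i ≤ d 0 * k ^ i := by
    intro i
    induction i with
    | zero => simp
    | succ n ih =>
      have step : d (n+1) ≤ k * d n := by
        have h := main (Qseq n) (Qseq (n+1)) (hgood n) (hgood (n+1))
        rw [← hrec n, ← hrec (n+1)] at h
        exact h
      calc d (n+1) ≤ k * d n := step
        _ ≤ k * (d 0 * k ^ n) := mul_le_mul_of_nonneg_left ih hk0.le
        _ = d 0 * k ^ (n+1) := by ring
  have hdpt : ∀ i (z : X × U), dist (Qseq i z.1 z.2) (Qseq (i+1) z.1 z.2) ≤ d 0 * k ^ i := by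
    intro i z
    rw [Real.dist_eq]
    exact (le_ciSup (hBddi _ _ (hgood i) (hgood (i+1))) z).trans (hd i)
  have hcauchy : ∀ z : X × U, ∃ l, Tendsto (fun n => Qseq n z.1 z.2) atTop (nhds l) := by
    intro z
    have : CauchySeq fun n => Qseq n z.1 z.2 :=
      cauchySeq_of_le_geometric k (d 0) hk1 (fun n => hdpt n z)
    exact cauchySeq_tendsto_of_complete this
  choose Qlim' hQlim using hcauchy
  refine ⟨fun x u => Qlim' (x, u), ?_⟩
  have hd0 : 0 ≤ d 0 := Real.iSup_nonneg fun z => abs_nonneg _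
  have hlimbd : ∀ i (z : X × U), |Qseq i z.1 z.2 - Qlim' z| ≤ d 0 * k ^ i / (1 - k) := by
    intro i z
    rw [← Real.dist_eq]
    exact dist_le_of_le_geometric_of_tendsto k (d 0) hk1 (fun n => hdpt n z) (hQlim z) i
  have hbnd : ∀ i, (⨆ z : X × U, |Qseq i z.1 z.2 - Qlim' (z.1, z.2)|) ≤ d 0 * k ^ i / (1 - k) := by
    intro i
    refine Real.iSup_le (fun z => hlimbd i z) (div_nonneg (mul_nonneg hd0 (pow_nonneg hk0.le i)) (by linarith))
  refine squeeze_zero (fun i => Real.iSup_nonneg fun z => abs_nonneg _) hbnd ?_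
  have h : Tendsto (fun i => d 0 * k ^ i / (1 - k)) atTop (nhds (d 0 * 0 / (1 - k))) :=
    ((tendsto_pow_atTop_nhds_zero_of_lt_one hk0.le hk1).const_mul (d 0)).div_const (1 - k)
  simpa using h
end

section
/- Let Q₁, Q₂ be bounded real random variables and define S_α(Q) = E[Q] + α Var(Q) with α ≥ 0. If |Q_i − E Q_i| ≤ B almost surely for i = 1,2, then |S_α(Q₁) − S_α(Q₂)| ≤ (1 + 4αB) ‖Q₁ − Q₂‖_∞. -/
open MeasureTheory

/-- the mean-plus-variance risk functional `S_α(Q) = E[Q] + α Var(Q)` is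
`(1 + 4αB)`-Lipschitz in the essential sup norm on `B`-bounded-excursion random variables. -/
theorem stmt_16 {Ω : Type*} [MeasurableSpace Ω]
    (μ : Measure Ω) [IsProbabilityMeasure μ]
    (Q₁ Q₂ : Ω → ℝ) (α B : ℝ) (hα : 0 ≤ α) (hB : 0 < B)
    (h₁ : MemLp Q₁ 2 μ) (h₂ : MemLp Q₂ 2 μ)
    (hb₁ : ∃ C, ∀ ω, |Q₁ ω| ≤ C) (hb₂ : ∃ C, ∀ ω, |Q₂ ω| ≤ C)
    (hexc₁ : ∀ᵐ ω ∂μ, |Q₁ ω - ∫ ω', Q₁ ω' ∂μ| ≤ B)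
    (hexc₂ : ∀ᵐ ω ∂μ, |Q₂ ω - ∫ ω', Q₂ ω' ∂μ| ≤ B) :
    |((∫ ω, Q₁ ω ∂μ) + α * ∫ ω, (Q₁ ω - ∫ ω', Q₁ ω' ∂μ) ^ 2 ∂μ)
        - ((∫ ω, Q₂ ω ∂μ) + α * ∫ ω, (Q₂ ω - ∫ ω', Q₂ ω' ∂μ) ^ 2 ∂μ)|
      ≤ (1 + 4 * α * B) * essSup (fun ω => |Q₁ ω - Q₂ ω|) μ := by
  haveI : (ae μ).NeBot := ae_neBot.mpr (IsProbabilityMeasure.ne_zero μ)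
  set m₁ := ∫ ω, Q₁ ω ∂μ with hm₁
  set m₂ := ∫ ω, Q₂ ω ∂μ with hm₂
  set D := essSup (fun ω => |Q₁ ω - Q₂ ω|) μ with hDdef
  obtain ⟨C₁, hC₁⟩ := hb₁
  obtain ⟨C₂, hC₂⟩ := hb₂
  have hint₁ : Integrable Q₁ μ := h₁.integrable (by norm_num)
  have hint₂ : Integrable Q₂ μ := h₂.integrable (by norm_num)
  have hbdd : Filter.IsBoundedUnder (· ≤ ·) (ae μ) (fun ω => |Q₁ ω - Q₂ ω|) :=
    ⟨C₁ + C₂, Filter.eventually_map.mpr <| Filter.Eventually.of_forall fun ω =>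
      (abs_sub _ _).trans (add_le_add (hC₁ ω) (hC₂ ω))⟩
  have haeD : ∀ᵐ ω ∂μ, |Q₁ ω - Q₂ ω| ≤ D := ae_le_essSup hbdd
  have hD0 : (0 : ℝ) ≤ D :=
    Filter.le_limsup_of_frequently_le
      ((Filter.Eventually.of_forall (fun ω => abs_nonneg (Q₁ ω - Q₂ ω))).frequently) hbdd
  have habs : Integrable (fun ω => |Q₁ ω - Q₂ ω|) μ := (hint₁.sub hint₂).abs
  have hmean : |m₁ - m₂| ≤ D := by
    rw [hm₁, hm₂, ← integral_sub hint₁ hint₂]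
    calc |∫ ω, (Q₁ ω - Q₂ ω) ∂μ| ≤ ∫ ω, |Q₁ ω - Q₂ ω| ∂μ := by simpa [Real.norm_eq_abs] using norm_integral_le_integral_norm (fun ω => Q₁ ω - Q₂ ω)
      _ ≤ ∫ _ω, D ∂μ := integral_mono_ae habs (integrable_const D) haeD
      _ = D := by simp
  have hVint₁ : Integrable (fun ω => (Q₁ ω - m₁) ^ 2) μ :=
    (h₁.sub (memLp_const m₁)).integrable_sq
  have hVint₂ : Integrable (fun ω => (Q₂ ω - m₂) ^ 2) μ :=
    (h₂.sub (memLp_const m₂)).integrable_sq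
  have hptw : ∀ᵐ ω ∂μ, |(Q₁ ω - m₁) ^ 2 - (Q₂ ω - m₂) ^ 2| ≤ 4 * B * D := by
    filter_upwards [haeD, hexc₁, hexc₂] with ω hd hx1 hx2
    have key : (Q₁ ω - m₁) ^ 2 - (Q₂ ω - m₂) ^ 2
        = ((Q₁ ω - m₁) + (Q₂ ω - m₂)) * ((Q₁ ω - m₁) - (Q₂ ω - m₂)) := by ring
    rw [key, abs_mul]
    have hA : |(Q₁ ω - m₁) + (Q₂ ω - m₂)| ≤ 2 * B :=
      (abs_add_le _ _).trans (by linarith)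
    have hB2 : |(Q₁ ω - m₁) - (Q₂ ω - m₂)| ≤ 2 * D := by
      have e : (Q₁ ω - m₁) - (Q₂ ω - m₂) = (Q₁ ω - Q₂ ω) - (m₁ - m₂) := by ring
      rw [e]
      exact (abs_sub _ _).trans (by linarith)
    calc |(Q₁ ω - m₁) + (Q₂ ω - m₂)| * |(Q₁ ω - m₁) - (Q₂ ω - m₂)|
        ≤ (2 * B) * (2 * D) := mul_le_mul hA hB2 (abs_nonneg _) (by linarith)
      _ = 4 * B * D := by ring
  have hvar : |(∫ ω, (Q₁ ω - m₁) ^ 2 ∂μ) - ∫ ω, (Q₂ ω - m₂) ^ 2 ∂μ| ≤ 4 * B * D := by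
    rw [← integral_sub hVint₁ hVint₂]
    calc |∫ ω, ((Q₁ ω - m₁) ^ 2 - (Q₂ ω - m₂) ^ 2) ∂μ|
        ≤ ∫ ω, |(Q₁ ω - m₁) ^ 2 - (Q₂ ω - m₂) ^ 2| ∂μ := by simpa [Real.norm_eq_abs] using norm_integral_le_integral_norm (fun ω => (Q₁ ω - m₁) ^ 2 - (Q₂ ω - m₂) ^ 2)
      _ ≤ ∫ _ω, 4 * B * D ∂μ :=
          integral_mono_ae (hVint₁.sub hVint₂).abs (integrable_const _) hptw
      _ = 4 * B * D := by simp
  calc |(m₁ + α * ∫ ω, (Q₁ ω - m₁) ^ 2 ∂μ) - (m₂ + α * ∫ ω, (Q₂ ω - m₂) ^ 2 ∂μ)|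
      ≤ |m₁ - m₂| + α * |(∫ ω, (Q₁ ω - m₁) ^ 2 ∂μ) - ∫ ω, (Q₂ ω - m₂) ^ 2 ∂μ| := by
        have e : (m₁ + α * ∫ ω, (Q₁ ω - m₁) ^ 2 ∂μ) - (m₂ + α * ∫ ω, (Q₂ ω - m₂) ^ 2 ∂μ)
            = (m₁ - m₂) + α * ((∫ ω, (Q₁ ω - m₁) ^ 2 ∂μ) - ∫ ω, (Q₂ ω - m₂) ^ 2 ∂μ) := by
          ring
        rw [e]
        exact (abs_add_le _ _).trans (by rw [abs_mul, abs_of_nonneg hα])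
    _ ≤ D + α * (4 * B * D) :=
        add_le_add hmean (mul_le_mul_of_nonneg_left hvar hα)
    _ = (1 + 4 * α * B) * D := by ring
end
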